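/- Let L ≥ 1, let δ₁,...,δ_L and \bar δ₁,...,\bar δ_L be positive reals with δ_j \bar δ_j ≤ 1/4 for all j, and define S = ∑_{r=1}^L ∏_{j<r} \bar δ_j ∏_{j>r} δ_j, \bar S = ∑_{r=1}^L ∏_{j<r} δ_j ∏_{j>r} \bar δ_j, P = ∏_{k=1}^L δ_k, \bar P = ∏_{k=1}^L \bar δ_k. Then (L·P/S)·(\bar P/\bar S) ≤ 1/(4L), i.e. 4L²·P·\bar P ≤ S·\bar S. -/

import Mathlib

open Finset

lemma split_prod (f : ℕ → ℝ) (r L : ℕ) (h1 : 1 ≤ r) (h2 : r ≤ L) :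
    (∏ j ∈ Icc 1 (r-1), f j) * f r * (∏ j ∈ Icc (r+1) L, f j)
      = ∏ j ∈ Icc 1 L, f j := by
  have e1 : Icc 1 (r-1) = Ioc 0 (r-1) := by
    ext x; simp only [mem_Icc, mem_Ioc]; omega
  have e2 : Icc (r+1) L = Ioc r L := by
    ext x; simp only [mem_Icc, mem_Ioc]; omega
  have e3 : Icc 1 L = Ioc 0 L := by
    ext x; simp only [mem_Icc, mem_Ioc]; omega
  rw [e1, e2, e3]
  have hr : r - 1 + 1 = r := Nat.succ_pred_eq_of_pos h1
  have : (∏ j ∈ Ioc 0 (r-1), f j) * f r = ∏ j ∈ Ioc 0 r, f j := by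
    rw [← hr, Finset.prod_Ioc_succ_top (Nat.zero_le _)]
    simp [hr]
  rw [this, Finset.prod_Ioc_consecutive _ (Nat.zero_le r) h2]

theorem stmt_18 (L : ℕ) (hL : 1 ≤ L) (δ δbar : ℕ → ℝ)
    (hδ : ∀ j, 1 ≤ j → j ≤ L → 0 < δ j) (hδbar : ∀ j, 1 ≤ j → j ≤ L → 0 < δbar j)
    (hprod : ∀ j, 1 ≤ j → j ≤ L → δ j * δbar j ≤ 1/4) :
    4 * (L : ℝ)^2 * (∏ k ∈ Icc 1 L, δ k) * (∏ k ∈ Icc 1 L, δbar k) ≤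
      (∑ r ∈ Icc 1 L, (∏ j ∈ Icc 1 (r-1), δbar j) * (∏ j ∈ Icc (r+1) L, δ j)) *
      (∑ r ∈ Icc 1 L, (∏ j ∈ Icc 1 (r-1), δ j) * (∏ j ∈ Icc (r+1) L, δbar j)) ∧
    ((L : ℝ) * (∏ k ∈ Icc 1 L, δ k) /
        (∑ r ∈ Icc 1 L, (∏ j ∈ Icc 1 (r-1), δbar j) * (∏ j ∈ Icc (r+1) L, δ j))) *
      ((∏ k ∈ Icc 1 L, δbar k) /
        (∑ r ∈ Icc 1 L, (∏ j ∈ Icc 1 (r-1), δ j) * (∏ j ∈ Icc (r+1) L, δbar j)))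
      ≤ 1 / (4 * L) := by
  set P := ∏ k ∈ Icc 1 L, δ k with hP
  set Pb := ∏ k ∈ Icc 1 L, δbar k with hPb
  set a : ℕ → ℝ := fun r => (∏ j ∈ Icc 1 (r-1), δbar j) * (∏ j ∈ Icc (r+1) L, δ j) with ha
  set ab : ℕ → ℝ := fun r => (∏ j ∈ Icc 1 (r-1), δ j) * (∏ j ∈ Icc (r+1) L, δbar j) with hab
  have hPpos : 0 < P := Finset.prod_pos (fun i hi => hδ i (mem_Icc.mp hi).1 (mem_Icc.mp hi).2)
  have hPbpos : 0 < Pb := Finset.prod_pos (fun i hi => hδbar i (mem_Icc.mp hi).1 (mem_Icc.mp hi).2)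
  have hapos : ∀ r ∈ Icc 1 L, 0 < a r := by
    intro r hr
    obtain ⟨h1, h2⟩ := mem_Icc.mp hr
    apply mul_pos
    · exact Finset.prod_pos (fun i hi => hδbar i (mem_Icc.mp hi).1
        (le_trans (mem_Icc.mp hi).2 (le_trans (Nat.sub_le r 1) h2)))
    · exact Finset.prod_pos (fun i hi => hδ i (le_trans (le_trans h1 (Nat.le_succ r)) (mem_Icc.mp hi).1) (mem_Icc.mp hi).2)
  have habpos : ∀ r ∈ Icc 1 L, 0 < ab r := by
    intro r hr
    obtain ⟨h1, h2⟩ := mem_Icc.mp hr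
    apply mul_pos
    · exact Finset.prod_pos (fun i hi => hδ i (mem_Icc.mp hi).1
        (le_trans (mem_Icc.mp hi).2 (le_trans (Nat.sub_le r 1) h2)))
    · exact Finset.prod_pos (fun i hi => hδbar i (le_trans (le_trans h1 (Nat.le_succ r)) (mem_Icc.mp hi).1) (mem_Icc.mp hi).2)
  -- key: a r * ab r ≥ 4 * P * Pb
  have hkey : ∀ r ∈ Icc 1 L, 4 * (P * Pb) ≤ a r * ab r := by
    intro r hr
    obtain ⟨h1, h2⟩ := mem_Icc.mp hr
    have hδr := hδ r h1 h2
    have hδbr := hδbar r h1 h2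
    have hprodr := hprod r h1 h2
    have e1 : a r * (δ r) * (∏ j ∈ Icc 1 (r-1), δ j) * (∏ j ∈ Icc (r+1) L, δbar j)
        * δbar r = P * Pb := by
      have t1 := split_prod δ r L h1 h2
      have t2 := split_prod δbar r L h1 h2
      simp only [ha, hP, hPb]
      nlinarith [t1, t2]
    have e2 : a r * ab r * (δ r * δbar r) = P * Pb := by
      simp only [hab]; nlinarith [e1]
    have hpos : 0 < a r * ab r := mul_pos (hapos r hr) (habpos r hr)
    nlinarith [mul_le_mul_of_nonneg_left hprodr (le_of_lt hpos)]
  -- Cauchy-Schwarz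
  set S := ∑ r ∈ Icc 1 L, a r with hS
  set Sb := ∑ r ∈ Icc 1 L, ab r with hSb
  have hSpos : 0 < S := Finset.sum_pos hapos ⟨1, mem_Icc.mpr ⟨le_refl 1, hL⟩⟩
  have hSbpos : 0 < Sb := Finset.sum_pos habpos ⟨1, mem_Icc.mpr ⟨le_refl 1, hL⟩⟩
  have cs : (∑ r ∈ Icc 1 L, Real.sqrt (a r) * Real.sqrt (ab r)) ^ 2 ≤ S * Sb := by
    have := Finset.sum_mul_sq_le_sq_mul_sq (Icc 1 L) (fun r => Real.sqrt (a r))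
      (fun r => Real.sqrt (ab r))
    have eS : ∑ r ∈ Icc 1 L, Real.sqrt (a r) ^ 2 = S :=
      Finset.sum_congr rfl (fun r hr => Real.sq_sqrt (le_of_lt (hapos r hr)))
    have eSb : ∑ r ∈ Icc 1 L, Real.sqrt (ab r) ^ 2 = Sb :=
      Finset.sum_congr rfl (fun r hr => Real.sq_sqrt (le_of_lt (habpos r hr)))
    rw [eS, eSb] at this
    exact this
  have lower : (L : ℝ) * (2 * Real.sqrt (P * Pb)) ≤
      ∑ r ∈ Icc 1 L, Real.sqrt (a r) * Real.sqrt (ab r) := by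
    have : ∀ r ∈ Icc 1 L, 2 * Real.sqrt (P * Pb) ≤ Real.sqrt (a r) * Real.sqrt (ab r) := by
      intro r hr
      rw [← Real.sqrt_mul (le_of_lt (hapos r hr))]
      have h4 : Real.sqrt (4 * (P * Pb)) = 2 * Real.sqrt (P * Pb) := by
        rw [show (4 : ℝ) = 2^2 by norm_num, Real.sqrt_mul (by positivity),
          Real.sqrt_sq (by norm_num)]
      rw [← h4]
      exact Real.sqrt_le_sqrt (hkey r hr)
    calc (L : ℝ) * (2 * Real.sqrt (P * Pb))
        = ∑ _r ∈ Icc 1 L, 2 * Real.sqrt (P * Pb) := by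
          rw [Finset.sum_const, Nat.card_Icc]; simp [nsmul_eq_mul]
      _ ≤ _ := Finset.sum_le_sum this
  have main : 4 * (L : ℝ)^2 * P * Pb ≤ S * Sb := by
    have h0 : 0 ≤ (L : ℝ) * (2 * Real.sqrt (P * Pb)) := by positivity
    have hsq : ((L : ℝ) * (2 * Real.sqrt (P * Pb)))^2 ≤
        (∑ r ∈ Icc 1 L, Real.sqrt (a r) * Real.sqrt (ab r)) ^ 2 :=
      pow_le_pow_left₀ h0 lower 2
    have e : ((L : ℝ) * (2 * Real.sqrt (P * Pb)))^2 = 4 * (L : ℝ)^2 * P * Pb := by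
      have : Real.sqrt (P * Pb) ^ 2 = P * Pb := Real.sq_sqrt (by positivity)
      nlinarith [this]
    linarith [le_trans hsq cs]
  refine ⟨main, ?_⟩
  rw [div_mul_div_comm, div_le_div_iff₀ (by positivity) (by positivity)]
  have hL1 : (1 : ℝ) ≤ (L : ℝ) := by exact_mod_cast hL
  nlinarith [main]
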